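/- Let P be a permutation matrix and let c > 0 be a real number such that ex(m,P) ≤ c·m for every positive integer m. Then for every n ≥ 1, the number of n×n 0-1 matrices avoiding P is at most 15^{c·n}. -/

import Mathlib

open Filter

noncomputable section

/-- An `n × n` 0-1 matrix `A` contains the `k × k` pattern `P` if there are strictly
increasing rows and columns selecting a submatrix that dominates `P`. -/
def Contains {k n : ℕ} (P : Matrix (Fin k) (Fin k) Bool)
    (A : Matrix (Fin n) (Fin n) Bool) : Prop :=
  ∃ r : Fin k → Fin n, ∃ c : Fin k → Fin n,
    StrictMono r ∧ StrictMono c ∧ ∀ i j, P i j = true → A (r i) (c j) = true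

/-- `A` avoids the pattern `P`. -/
def Avoids {k n : ℕ} (P : Matrix (Fin k) (Fin k) Bool)
    (A : Matrix (Fin n) (Fin n) Bool) : Prop := ¬ Contains P A

/-- The permutation matrix of a permutation. -/
def permMatrix {n : ℕ} (σ : Equiv.Perm (Fin n)) : Matrix (Fin n) (Fin n) Bool :=
  fun i j => decide (σ i = j)

/-- `A` is a permutation matrix. -/
def IsPermMatrix {n : ℕ} (A : Matrix (Fin n) (Fin n) Bool) : Prop :=
  ∃ σ : Equiv.Perm (Fin n), A = permMatrix σ

/-- Number of ones of a 0-1 matrix. -/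
def numOnes {m n : ℕ} (A : Matrix (Fin m) (Fin n) Bool) : ℕ :=
  (Finset.univ.filter fun p : Fin m × Fin n => A p.1 p.2 = true).card

/-- `SW P n = S_P(n)`, the number of `n × n` permutation matrices avoiding `P`. -/
def SW {k : ℕ} (P : Matrix (Fin k) (Fin k) Bool) (n : ℕ) : ℕ :=
  Nat.card {A : Matrix (Fin n) (Fin n) Bool // IsPermMatrix A ∧ Avoids P A}

/-- `exFH P n = ex(n, P)`, the maximum number of ones in an `n × n` 0-1 matrix
avoiding `P`. -/
def exFH {k : ℕ} (P : Matrix (Fin k) (Fin k) Bool) (n : ℕ) : ℕ :=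
  sSup {m : ℕ | ∃ A : Matrix (Fin n) (Fin n) Bool, Avoids P A ∧ numOnes A = m}

/-- `F c = inf over positive integers t of (t!)^(1/t) * 15^(c/t) / c`. -/
def F (c : ℝ) : ℝ :=
  ⨅ t : ℕ+, ((t : ℕ).factorial : ℝ) ^ ((1 : ℝ) / (t : ℕ)) * (15 : ℝ) ^ (c / (t : ℕ)) / c

/-- The block (among `n` consecutive blocks of length `t`) containing a given
index of `Fin (t * n)`. -/
def blockOf {t n : ℕ} (ht : 0 < t) (i : Fin (t * n)) : Fin n :=
  ⟨(i : ℕ) / t, by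
    rw [Nat.div_lt_iff_lt_mul ht]
    exact lt_of_lt_of_le i.isLt (le_of_eq (mul_comm t n))⟩

/-- The `t`-contraction of an `(t*n) × (t*n)` 0-1 matrix: entry `(a,b)` is 1 iff
the block `I_a × I_b` contains a one. -/
def contMat {t n : ℕ} (ht : 0 < t) (A : Matrix (Fin (t * n)) (Fin (t * n)) Bool) :
    Matrix (Fin n) (Fin n) Bool :=
  fun a b => @decide (∃ i j, blockOf ht i = a ∧ blockOf ht j = b ∧ A i j = true)
    (@Fintype.decidableExistsFintype _ _ (fun _ => Fintype.decidableExistsFintype) _)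

end


section Aux

private lemma two' : (0 : ℕ) < 2 := by norm_num

private lemma permMatrix_self {k : ℕ} (σ : Equiv.Perm (Fin k)) (i : Fin k) :
    permMatrix σ i (σ i) = true := by simp [permMatrix]

private lemma permMatrix_eq {k : ℕ} {σ : Equiv.Perm (Fin k)} {i j : Fin k}
    (h : permMatrix σ i j = true) : σ i = j := by simpa [permMatrix] using h

/-- A set of the form `{i | f i < n}` for strictly monotone `f` is an initial segment. -/
private lemma mem_filter_iff_lt_card {k N : ℕ} (f : Fin k → Fin N) (hf : StrictMono f)
    (n : ℕ) (i : Fin k) :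
    i ∈ Finset.univ.filter (fun i => (f i : ℕ) < n) ↔
      (i : ℕ) < (Finset.univ.filter (fun i : Fin k => (f i : ℕ) < n)).card := by
  classical
  constructor
  · intro hi
    have hsub : Finset.Iic i ⊆ Finset.univ.filter (fun i : Fin k => (f i : ℕ) < n) := by
      intro a ha
      simp only [Finset.mem_Iic] at ha
      simp only [Finset.mem_filter, Finset.mem_univ, true_and] at hi ⊢
      exact lt_of_le_of_lt (hf.monotone ha) hi
    have hcard := Finset.card_le_card hsub
    rw [Fin.card_Iic] at hcard
    omega
  · intro hi
    by_contra hmem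
    have hsub : Finset.univ.filter (fun i : Fin k => (f i : ℕ) < n) ⊆ Finset.Iio i := by
      intro a ha
      simp only [Finset.mem_Iio]
      by_contra hai
      push_neg at hai
      apply hmem
      simp only [Finset.mem_filter, Finset.mem_univ, true_and] at ha ⊢
      exact lt_of_le_of_lt (hf.monotone hai) ha
    have hcard := Finset.card_le_card hsub
    rw [Fin.card_Iio] at hcard
    omega

/-- Sum-indecomposability property. -/
private def Goodp {k : ℕ} (σ : Equiv.Perm (Fin k)) : Prop :=
  ∀ j : ℕ, 0 < j → j < k → ¬ (∀ i : Fin k, (i : ℕ) < j ↔ ((σ i : ℕ) < j))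

/-- Every permutation is sum-indecomposable or skew-indecomposable. -/
private lemma goodp_or {k : ℕ} (σ : Equiv.Perm (Fin k)) :
    Goodp σ ∨ Goodp (σ.trans Fin.revPerm) := by
  by_contra hcon
  push_neg at hcon
  obtain ⟨h1, h2⟩ := hcon
  unfold Goodp at h1 h2
  push_neg at h1 h2
  obtain ⟨a, ha0, hak, hA⟩ := h1
  obtain ⟨b, hb0, hbk, hB⟩ := h2
  have hB' : ∀ i : Fin k, (i : ℕ) < b ↔ (((σ i).rev : ℕ) < b) := by
    intro i
    simpa [Equiv.trans_apply] using hB i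
  have hk : 0 < k := lt_trans ha0 hak
  rcases le_or_gt b a with hba | hab
  · set i0 := σ.symm ⟨k - 1, by omega⟩ with hi0
    have hσ : σ i0 = ⟨k - 1, by omega⟩ := σ.apply_symm_apply _
    have hlt : (i0 : ℕ) < b := (hB' i0).mpr (by
      rw [hσ]
      show k - (k - 1 + 1) < b
      omega)
    have hlta : (i0 : ℕ) < a := lt_of_lt_of_le hlt hba
    have hthis := (hA i0).mp hlta
    rw [hσ] at hthis
    have hval : (k - 1 : ℕ) < a := hthis
    omega
  · set i1 := σ.symm ⟨0, hk⟩ with hi1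
    have hσ : σ i1 = ⟨0, hk⟩ := σ.apply_symm_apply _
    have hlt : (i1 : ℕ) < a := (hA i1).mpr (by rw [hσ]; exact ha0)
    have hltb : (i1 : ℕ) < b := lt_trans hlt hab
    have hthis := (hB' i1).mp hltb
    rw [hσ] at hthis
    have hval : (k - (0 + 1) : ℕ) < b := hthis
    omega

/-- Reversing the columns of a square matrix. -/
private def rvM {m : ℕ} (A : Matrix (Fin m) (Fin m) Bool) : Matrix (Fin m) (Fin m) Bool :=
  fun i j => A i j.rev

private lemma rvM_rvM {m : ℕ} (A : Matrix (Fin m) (Fin m) Bool) : rvM (rvM A) = A := by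
  funext i j
  simp [rvM, Fin.rev_rev]

private lemma contains_rvM {k n : ℕ} {P : Matrix (Fin k) (Fin k) Bool}
    {A : Matrix (Fin n) (Fin n) Bool} (h : Contains P A) : Contains (rvM P) (rvM A) := by
  obtain ⟨r, c, hr, hc, hd⟩ := h
  refine ⟨r, fun j => (c j.rev).rev, hr, ?_, ?_⟩
  · intro x y hxy
    have h1 : y.rev < x.rev := Fin.rev_lt_rev.mpr hxy
    have h2 : c y.rev < c x.rev := hc h1
    exact Fin.rev_lt_rev.mpr h2
  · intro i j hij
    have hd' := hd i j.rev (by simpa [rvM] using hij)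
    simpa [rvM, Fin.rev_rev] using hd'

private lemma avoids_rvM {k n : ℕ} {P : Matrix (Fin k) (Fin k) Bool}
    {A : Matrix (Fin n) (Fin n) Bool} : Avoids (rvM P) (rvM A) ↔ Avoids P A := by
  constructor
  · intro h hcon
    exact h (contains_rvM hcon)
  · intro h hcon
    apply h
    have := contains_rvM hcon
    rwa [rvM_rvM, rvM_rvM] at this

private lemma card_rvM {k : ℕ} (P : Matrix (Fin k) (Fin k) Bool) (m : ℕ) :
    Nat.card {A : Matrix (Fin m) (Fin m) Bool // Avoids P A} =
      Nat.card {A : Matrix (Fin m) (Fin m) Bool // Avoids (rvM P) A} := by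
  apply Nat.card_congr
  refine ⟨fun A => ⟨rvM A.1, ?_⟩, fun A => ⟨rvM A.1, ?_⟩, ?_, ?_⟩
  · exact avoids_rvM.mpr A.2
  · have h := (avoids_rvM (P := P) (A := rvM A.1))
    rw [rvM_rvM] at h
    exact h.mp A.2
  · intro A
    exact Subtype.ext (rvM_rvM A.1)
  · intro A
    exact Subtype.ext (rvM_rvM A.1)

private lemma rvM_permMatrix {k : ℕ} (σ : Equiv.Perm (Fin k)) :
    rvM (permMatrix σ) = permMatrix (σ.trans Fin.revPerm) := by
  funext i j
  simp only [rvM, permMatrix, Equiv.trans_apply, Fin.revPerm_apply]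
  exact decide_eq_decide.mpr Fin.rev_eq_iff.symm

end Aux

section Dsum

variable {k n : ℕ}

/-- Diagonal direct sum of two `n × n` matrices. -/
private def dsum (A B : Matrix (Fin n) (Fin n) Bool) :
    Matrix (Fin (2 * n)) (Fin (2 * n)) Bool :=
  fun i j =>
    if hi : (i : ℕ) < n then
      (if hj : (j : ℕ) < n then A ⟨i, hi⟩ ⟨j, hj⟩ else false)
    else
      (if hj : (j : ℕ) < n then false
       else B ⟨(i : ℕ) - n, by have := i.isLt; omega⟩ ⟨(j : ℕ) - n, by have := j.isLt; omega⟩)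

private lemma dsum_tl (A B : Matrix (Fin n) (Fin n) Bool) (i j : Fin (2 * n))
    (hi : (i : ℕ) < n) (hj : (j : ℕ) < n) : dsum A B i j = A ⟨i, hi⟩ ⟨j, hj⟩ := by
  unfold dsum
  rw [dif_pos hi, dif_pos hj]

private lemma dsum_br (A B : Matrix (Fin n) (Fin n) Bool) (i j : Fin (2 * n))
    (hi : n ≤ (i : ℕ)) (hj : n ≤ (j : ℕ)) :
    dsum A B i j = B ⟨(i : ℕ) - n, by have := i.isLt; omega⟩ ⟨(j : ℕ) - n, by have := j.isLt; omega⟩ := by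
  unfold dsum
  rw [dif_neg (by omega), dif_neg (by omega)]

private lemma dsum_od (A B : Matrix (Fin n) (Fin n) Bool) (i j : Fin (2 * n))
    (h : ((i : ℕ) < n ∧ n ≤ (j : ℕ)) ∨ (n ≤ (i : ℕ) ∧ (j : ℕ) < n)) :
    dsum A B i j = false := by
  unfold dsum
  rcases h with ⟨h1, h2⟩ | ⟨h1, h2⟩
  · rw [dif_pos h1, dif_neg (by omega)]
  · rw [dif_neg (by omega), dif_pos h2]

private lemma dsum_avoids {σ : Equiv.Perm (Fin k)} (hg : Goodp σ)
    {A B : Matrix (Fin n) (Fin n) Bool}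
    (hA : Avoids (permMatrix σ) A) (hB : Avoids (permMatrix σ) B) :
    Avoids (permMatrix σ) (dsum A B) := by
  classical
  rintro ⟨r, c, hr, hc, hd⟩
  have key : ∀ i : Fin k, ((r i : ℕ) < n ∧ ((c (σ i)) : ℕ) < n) ∨
      (n ≤ (r i : ℕ) ∧ n ≤ ((c (σ i)) : ℕ)) := by
    intro i
    have h := hd i (σ i) (permMatrix_self σ i)
    rcases lt_or_ge ((r i : ℕ)) n with h1 | h1 <;>
      rcases lt_or_ge ((c (σ i) : ℕ)) n with h2 | h2
    · exact Or.inl ⟨h1, h2⟩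
    · rw [dsum_od A B _ _ (Or.inl ⟨h1, h2⟩)] at h; cases h
    · rw [dsum_od A B _ _ (Or.inr ⟨h1, h2⟩)] at h; cases h
    · exact Or.inr ⟨h1, h2⟩
  have hmemS := mem_filter_iff_lt_card r hr n
  have hmemC := mem_filter_iff_lt_card c hc n
  have hSC : ∀ i : Fin k, i ∈ Finset.univ.filter (fun i : Fin k => (r i : ℕ) < n) ↔
      σ i ∈ Finset.univ.filter (fun i : Fin k => (c i : ℕ) < n) := by
    intro i
    simp only [Finset.mem_filter, Finset.mem_univ, true_and]
    rcases key i with ⟨h1, h2⟩ | ⟨h1, h2⟩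
    · constructor <;> intro <;> [exact h2; exact h1]
    · constructor <;> intro h <;> omega
  have hcard : (Finset.univ.filter (fun i : Fin k => (r i : ℕ) < n)).card =
      (Finset.univ.filter (fun i : Fin k => (c i : ℕ) < n)).card := by
    apply Finset.card_bij (fun i _ => σ i)
    · intro a ha
      exact (hSC a).mp ha
    · intro a _ b _ h
      exact σ.injective h
    · intro b hb
      refine ⟨σ.symm b, ?_, σ.apply_symm_apply b⟩
      have h := hSC (σ.symm b)
      rw [σ.apply_symm_apply] at h
      exact h.mpr hb
  set j := (Finset.univ.filter (fun i : Fin k => (r i : ℕ) < n)).card with hj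
  have hiff : ∀ i : Fin k, (i : ℕ) < j ↔ ((σ i : ℕ) < j) := by
    intro i
    have h1 := (hmemS i).symm
    have h2 := hSC i
    have h3 := hmemC (σ i)
    rw [← hcard] at h3
    exact (h1.trans h2).trans h3
  have hjk : j ≤ k := by
    have h := Finset.card_filter_le (Finset.univ : Finset (Fin k)) (fun i => (r i : ℕ) < n)
    simpa using h
  rcases Nat.eq_zero_or_pos j with hj0 | hjpos
  · -- everything in the bottom-right block : B contains P
    have hrn : ∀ i : Fin k, n ≤ (r i : ℕ) := by
      intro i
      by_contra hlt
      push_neg at hlt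
      have hmem : i ∈ Finset.univ.filter (fun i : Fin k => (r i : ℕ) < n) := by
        simp only [Finset.mem_filter, Finset.mem_univ, true_and]; exact hlt
      have := (hmemS i).mp hmem
      omega
    have hcn : ∀ i : Fin k, n ≤ (c i : ℕ) := by
      intro i
      by_contra hlt
      push_neg at hlt
      have hmem : i ∈ Finset.univ.filter (fun i : Fin k => (c i : ℕ) < n) := by
        simp only [Finset.mem_filter, Finset.mem_univ, true_and]; exact hlt
      have := (hmemC i).mp hmem
      omega
    apply hB
    refine ⟨fun i => ⟨(r i : ℕ) - n, by have := (r i).isLt; omega⟩,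
        fun i => ⟨(c i : ℕ) - n, by have := (c i).isLt; omega⟩, ?_, ?_, ?_⟩
    · intro a b hab
      have h1 : (r a : ℕ) < (r b : ℕ) := hr hab
      have h2 := hrn a
      simp only [Fin.mk_lt_mk]
      omega
    · intro a b hab
      have h1 : (c a : ℕ) < (c b : ℕ) := hc hab
      have h2 := hcn a
      simp only [Fin.mk_lt_mk]
      omega
    · intro i jj hij
      have h := hd i jj hij
      rw [dsum_br A B _ _ (hrn i) (hcn jj)] at h
      exact h
  · rcases lt_or_eq_of_le hjk with hjlt | hjeq
    · exact hg j hjpos hjlt hiff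
    · -- everything in the top-left block : A contains P
      have hrn : ∀ i : Fin k, (i : ℕ) < j → True := fun _ _ => trivial
      have hrn' : ∀ i : Fin k, (r i : ℕ) < n := by
        intro i
        have hmem : i ∈ Finset.univ.filter (fun i : Fin k => (r i : ℕ) < n) :=
          (hmemS i).mpr (by rw [hjeq]; exact i.isLt)
        simpa using hmem
      have hcn' : ∀ i : Fin k, (c i : ℕ) < n := by
        intro i
        have hmem : i ∈ Finset.univ.filter (fun i : Fin k => (c i : ℕ) < n) :=
          (hmemC i).mpr (by rw [← hcard, hjeq]; exact i.isLt)
        simpa using hmem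
      apply hA
      refine ⟨fun i => ⟨(r i : ℕ), hrn' i⟩, fun i => ⟨(c i : ℕ), hcn' i⟩, ?_, ?_, ?_⟩
      · intro a b hab
        simp only [Fin.mk_lt_mk]
        exact hr hab
      · intro a b hab
        simp only [Fin.mk_lt_mk]
        exact hc hab
      · intro i jj hij
        have h := hd i jj hij
        rw [dsum_tl A B _ _ (hrn' i) (hcn' jj)] at h
        exact h

private lemma card_mul_card_le {σ : Equiv.Perm (Fin k)} (hg : Goodp σ) (n : ℕ) :
    Nat.card {A : Matrix (Fin n) (Fin n) Bool // Avoids (permMatrix σ) A} *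
      Nat.card {A : Matrix (Fin n) (Fin n) Bool // Avoids (permMatrix σ) A} ≤
      Nat.card {A : Matrix (Fin (2 * n)) (Fin (2 * n)) Bool // Avoids (permMatrix σ) A} := by
  rw [← Nat.card_prod]
  apply Nat.card_le_card_of_injective
    (fun p : {A : Matrix (Fin n) (Fin n) Bool // Avoids (permMatrix σ) A} ×
        {A : Matrix (Fin n) (Fin n) Bool // Avoids (permMatrix σ) A} =>
      (⟨dsum p.1.1 p.2.1, dsum_avoids hg p.1.2 p.2.2⟩ :
        {A : Matrix (Fin (2 * n)) (Fin (2 * n)) Bool // Avoids (permMatrix σ) A}))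
  intro p q h
  have hm : dsum p.1.1 p.2.1 = dsum q.1.1 q.2.1 := congrArg Subtype.val h
  have hA : p.1.1 = q.1.1 := by
    funext i jj
    have h0 := congrFun (congrFun hm ⟨(i : ℕ), by have := i.isLt; omega⟩)
      ⟨(jj : ℕ), by have := jj.isLt; omega⟩
    rw [dsum_tl p.1.1 p.2.1 _ _ i.isLt jj.isLt, dsum_tl q.1.1 q.2.1 _ _ i.isLt jj.isLt] at h0
    simpa using h0
  have hBeq : p.2.1 = q.2.1 := by
    funext i jj
    have h0 := congrFun (congrFun hm ⟨n + (i : ℕ), by have := i.isLt; omega⟩)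
      ⟨n + (jj : ℕ), by have := jj.isLt; omega⟩
    rw [dsum_br p.1.1 p.2.1 _ _ (Nat.le_add_right n _) (Nat.le_add_right n _),
      dsum_br q.1.1 q.2.1 _ _ (Nat.le_add_right n _) (Nat.le_add_right n _)] at h0
    simpa using h0
  exact Prod.ext (Subtype.ext hA) (Subtype.ext hBeq)

end Dsum

section Contract

variable {k n : ℕ}

private lemma lt_of_blockOf_lt {t m : ℕ} {ht : 0 < t} {i i' : Fin (t * m)}
    (h : blockOf ht i < blockOf ht i') : i < i' := by
  have h' : (i : ℕ) / t < (i' : ℕ) / t := h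
  have hgoal : (i : ℕ) < (i' : ℕ) := by
    by_contra hle
    push_neg at hle
    exact absurd (Nat.div_le_div_right (c := t) hle) (by omega)
  exact hgoal

private lemma contMat_avoids {σ : Equiv.Perm (Fin k)}
    {A : Matrix (Fin (2 * n)) (Fin (2 * n)) Bool}
    (hA : Avoids (permMatrix σ) A) : Avoids (permMatrix σ) (contMat two' A) := by
  rintro ⟨r, c, hr, hc, hd⟩
  have hx : ∀ i : Fin k, ∃ p : Fin (2 * n) × Fin (2 * n),
      blockOf two' p.1 = r i ∧ blockOf two' p.2 = c (σ i) ∧ A p.1 p.2 = true := by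
    intro i
    have h := hd i (σ i) (permMatrix_self σ i)
    have h' := @of_decide_eq_true _ (@Fintype.decidableExistsFintype _ _ (fun _ => Fintype.decidableExistsFintype) _) h
    obtain ⟨i', j', h1, h2, h3⟩ := h'
    exact ⟨(i', j'), h1, h2, h3⟩
  choose p hp1 hp2 hp3 using hx
  apply hA
  refine ⟨fun i => (p i).1, fun j => (p (σ.symm j)).2, ?_, ?_, ?_⟩
  · intro a b hab
    apply lt_of_blockOf_lt (ht := two')
    rw [hp1 a, hp1 b]
    exact hr hab
  · intro a b hab
    apply lt_of_blockOf_lt (ht := two')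
    rw [hp2 (σ.symm a), hp2 (σ.symm b)]
    simp only [Equiv.apply_symm_apply]
    exact hc hab
  · intro i jj hij
    have hEq : σ i = jj := permMatrix_eq hij
    subst hEq
    show A (p i).1 (p (σ.symm (σ i))).2 = true
    rw [Equiv.symm_apply_apply]
    exact hp3 i

/-- The `2 × 2` block of `A` at block position `(a, b)`. -/
private def blkF (A : Matrix (Fin (2 * n)) (Fin (2 * n)) Bool) (a b : Fin n) :
    Fin 2 → Fin 2 → Bool :=
  fun s t =>
    A ⟨2 * (a : ℕ) + (s : ℕ), by have := a.isLt; have := s.isLt; omega⟩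
      ⟨2 * (b : ℕ) + (t : ℕ), by have := b.isLt; have := t.isLt; omega⟩

private lemma blk_spec (A : Matrix (Fin (2 * n)) (Fin (2 * n)) Bool) (i j : Fin (2 * n)) :
    blkF A (blockOf two' i) (blockOf two' j)
      ⟨(i : ℕ) % 2, by omega⟩ ⟨(j : ℕ) % 2, by omega⟩ = A i j := by
  unfold blkF
  exact congrArg₂ A
    (Fin.ext (show 2 * ((i : ℕ) / 2) + ((i : ℕ) % 2) = (i : ℕ) by omega))
    (Fin.ext (show 2 * ((j : ℕ) / 2) + ((j : ℕ) % 2) = (j : ℕ) by omega))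

private lemma blk_ne {A : Matrix (Fin (2 * n)) (Fin (2 * n)) Bool} {a b : Fin n}
    (h : contMat two' A a b = true) : blkF A a b ≠ (fun _ _ => false) := by
  obtain ⟨i, j, h1, h2, h3⟩ := @of_decide_eq_true _ (@Fintype.decidableExistsFintype _ _ (fun _ => Fintype.decidableExistsFintype) _) h
  intro hf
  have h4 : blkF A (blockOf two' i) (blockOf two' j)
      ⟨(i : ℕ) % 2, by omega⟩ ⟨(j : ℕ) % 2, by omega⟩ = true := (blk_spec A i j).trans h3
  rw [h1, h2, hf] at h4
  simp at h4

private lemma contMat_false {A : Matrix (Fin (2 * n)) (Fin (2 * n)) Bool} {a b : Fin n}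
    (h : contMat two' A a b = false) {i j : Fin (2 * n)}
    (h1 : blockOf two' i = a) (h2 : blockOf two' j = b) : A i j = false := by
  by_contra hne
  have h3 : A i j = true := by revert hne; cases A i j <;> simp
  have h4 : contMat two' A a b = true := @decide_eq_true _ (@Fintype.decidableExistsFintype _ _ (fun _ => Fintype.decidableExistsFintype) _) ⟨i, j, h1, h2, h3⟩
  rw [h4] at h
  cases h

/-- Decoding a contracted matrix together with its blocks at ones. -/
private def decodeT (P : Matrix (Fin k) (Fin k) Bool) (m : ℕ)
    (x : Σ B : {B : Matrix (Fin m) (Fin m) Bool // Avoids P B},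
      ({p : Fin m × Fin m // B.1 p.1 p.2 = true} →
        {g : Fin 2 → Fin 2 → Bool // g ≠ fun _ _ => false})) :
    Matrix (Fin (2 * m)) (Fin (2 * m)) Bool :=
  fun i j =>
    if h : x.1.1 (blockOf two' i) (blockOf two' j) = true then
      (x.2 ⟨(blockOf two' i, blockOf two' j), h⟩).1 ⟨(i : ℕ) % 2, by omega⟩ ⟨(j : ℕ) % 2, by omega⟩
    else false

private lemma decode_encode (P : Matrix (Fin k) (Fin k) Bool)
    (A : Matrix (Fin (2 * n)) (Fin (2 * n)) Bool) (hc : Avoids P (contMat two' A)) :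
    decodeT P n ⟨⟨contMat two' A, hc⟩, fun p => ⟨blkF A p.1.1 p.1.2, blk_ne p.2⟩⟩ = A := by
  funext i j
  show (if h : contMat two' A (blockOf two' i) (blockOf two' j) = true then _ else false) = A i j
  by_cases hb : contMat two' A (blockOf two' i) (blockOf two' j) = true
  · rw [dif_pos hb]
    exact blk_spec A i j
  · rw [dif_neg hb]
    have hfalse : contMat two' A (blockOf two' i) (blockOf two' j) = false := by
      revert hb; cases contMat two' A (blockOf two' i) (blockOf two' j) <;> simp
    exact (contMat_false hfalse rfl rfl).symm

private lemma numOnes_le_exFH (P : Matrix (Fin k) (Fin k) Bool)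
    {B : Matrix (Fin n) (Fin n) Bool} (hB : Avoids P B) : numOnes B ≤ exFH P n := by
  apply le_csSup
  · refine ⟨n * n, ?_⟩
    rintro m ⟨A, _, rfl⟩
    calc numOnes A ≤ (Finset.univ : Finset (Fin n × Fin n)).card := Finset.card_filter_le _ _
      _ = n * n := by simp
  · exact ⟨B, hB, rfl⟩

private lemma card_contract_le (σ : Equiv.Perm (Fin k)) (n : ℕ) :
    Nat.card {A : Matrix (Fin (2 * n)) (Fin (2 * n)) Bool // Avoids (permMatrix σ) A} ≤
      Nat.card {B : Matrix (Fin n) (Fin n) Bool // Avoids (permMatrix σ) B} *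
        15 ^ exFH (permMatrix σ) n := by
  classical
  set P := permMatrix σ with hPdef
  haveI : Fintype {B : Matrix (Fin n) (Fin n) Bool // Avoids P B} := Fintype.ofFinite _
  have hNZ : Fintype.card {g : Fin 2 → Fin 2 → Bool // g ≠ fun _ _ => false} = 15 := by decide
  have step : Nat.card {A : Matrix (Fin (2 * n)) (Fin (2 * n)) Bool // Avoids P A} ≤
      Nat.card (Σ B : {B : Matrix (Fin n) (Fin n) Bool // Avoids P B},
        ({p : Fin n × Fin n // B.1 p.1 p.2 = true} →
          {g : Fin 2 → Fin 2 → Bool // g ≠ fun _ _ => false})) := by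
    apply Nat.card_le_card_of_injective
      (fun A => ⟨⟨contMat two' A.1, contMat_avoids A.2⟩,
        fun p => ⟨blkF A.1 p.1.1 p.1.2, blk_ne p.2⟩⟩)
    intro A A' h
    have h2 := congrArg (decodeT P n) h
    rw [decode_encode, decode_encode] at h2
    exact Subtype.ext h2
  have hsig : Nat.card (Σ B : {B : Matrix (Fin n) (Fin n) Bool // Avoids P B},
      ({p : Fin n × Fin n // B.1 p.1 p.2 = true} →
        {g : Fin 2 → Fin 2 → Bool // g ≠ fun _ _ => false})) =
      ∑ B : {B : Matrix (Fin n) (Fin n) Bool // Avoids P B}, 15 ^ numOnes B.1 := by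
    rw [Nat.card_eq_fintype_card, Fintype.card_sigma]
    apply Finset.sum_congr rfl
    intro B _
    rw [Fintype.card_fun, hNZ]
    congr 1
    rw [Fintype.card_subtype]
    rfl
  have hbound : ∑ B : {B : Matrix (Fin n) (Fin n) Bool // Avoids P B}, 15 ^ numOnes B.1 ≤
      Nat.card {B : Matrix (Fin n) (Fin n) Bool // Avoids P B} * 15 ^ exFH P n := by
    calc ∑ B : {B : Matrix (Fin n) (Fin n) Bool // Avoids P B}, 15 ^ numOnes B.1
        ≤ ∑ _B : {B : Matrix (Fin n) (Fin n) Bool // Avoids P B}, 15 ^ exFH P n :=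
          Finset.sum_le_sum fun B _ =>
            Nat.pow_le_pow_right (by norm_num) (numOnes_le_exFH P B.2)
      _ = Nat.card {B : Matrix (Fin n) (Fin n) Bool // Avoids P B} * 15 ^ exFH P n := by
          rw [Finset.sum_const, Finset.card_univ, Nat.card_eq_fintype_card, smul_eq_mul]
  exact step.trans (hsig ▸ hbound)

end Contract

section Main

private lemma avoids_zero {k : ℕ} {σ : Equiv.Perm (Fin k)} (hk : 0 < k) (n : ℕ) :
    Avoids (permMatrix σ) (fun _ _ => false : Matrix (Fin n) (Fin n) Bool) := by
  rintro ⟨r, c, _, _, hd⟩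
  have h := hd ⟨0, hk⟩ (σ ⟨0, hk⟩) (permMatrix_self σ _)
  simp at h

private lemma card_sq_le {k : ℕ} (σ : Equiv.Perm (Fin k)) (n : ℕ) :
    Nat.card {A : Matrix (Fin n) (Fin n) Bool // Avoids (permMatrix σ) A} *
      Nat.card {A : Matrix (Fin n) (Fin n) Bool // Avoids (permMatrix σ) A} ≤
      Nat.card {A : Matrix (Fin (2 * n)) (Fin (2 * n)) Bool // Avoids (permMatrix σ) A} := by
  rcases goodp_or σ with hg | hg
  · exact card_mul_card_le hg n
  · have h1 := card_rvM (permMatrix σ) n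
    have h2 := card_rvM (permMatrix σ) (2 * n)
    rw [rvM_permMatrix] at h1 h2
    rw [h1, h2]
    exact card_mul_card_le hg n

end Main

theorem avoiders_card_le_fifteen_pow {k : ℕ} (P : Matrix (Fin k) (Fin k) Bool)
    (hP : IsPermMatrix P) (c : ℝ) (hc : 0 < c)
    (hex : ∀ m : ℕ, 0 < m → (exFH P m : ℝ) ≤ c * m)
    (n : ℕ) (hn : 1 ≤ n) :
    (Nat.card {A : Matrix (Fin n) (Fin n) Bool // Avoids P A} : ℝ) ≤
      (15 : ℝ) ^ (c * n) := by
  classical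
  obtain ⟨σ, rfl⟩ := hP
  rcases Nat.eq_zero_or_pos k with hk | hk
  · subst hk
    haveI hempty : IsEmpty {A : Matrix (Fin n) (Fin n) Bool // Avoids (permMatrix σ) A} := by
      refine ⟨?_⟩
      rintro ⟨A, hA⟩
      exact hA ⟨Fin.elim0, Fin.elim0, by intro a; exact a.elim0,
        by intro a; exact a.elim0, by intro a; exact a.elim0⟩
    rw [Nat.card_of_isEmpty]
    simp only [Nat.cast_zero]
    positivity
  · have h1 := card_sq_le σ n
    have h2 := card_contract_le σ n
    haveI : Nonempty {A : Matrix (Fin n) (Fin n) Bool // Avoids (permMatrix σ) A} :=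
      ⟨⟨fun _ _ => false, avoids_zero hk n⟩⟩
    have hpos : 0 < Nat.card {A : Matrix (Fin n) (Fin n) Bool // Avoids (permMatrix σ) A} :=
      Nat.card_pos
    have h3 : Nat.card {A : Matrix (Fin n) (Fin n) Bool // Avoids (permMatrix σ) A} ≤
        15 ^ exFH (permMatrix σ) n :=
      Nat.le_of_mul_le_mul_left (h1.trans h2) hpos
    have h4 : ((exFH (permMatrix σ) n : ℕ) : ℝ) ≤ c * n := hex n (by omega)
    calc (Nat.card {A : Matrix (Fin n) (Fin n) Bool // Avoids (permMatrix σ) A} : ℝ)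
        ≤ ((15 ^ exFH (permMatrix σ) n : ℕ) : ℝ) := by exact_mod_cast h3
      _ = (15 : ℝ) ^ ((exFH (permMatrix σ) n : ℕ) : ℝ) := by
          rw [Nat.cast_pow, Real.rpow_natCast]
          norm_num
      _ ≤ (15 : ℝ) ^ (c * n) :=
          Real.rpow_le_rpow_of_exponent_le (by norm_num) h4
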